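/- Let A be a normal bounded distributive lattice. Then every prime filter of A is contained in a unique maximal proper filter of A. -/
import Mathlib


/-- `F` is a (lattice) filter: contains `⊤`, is upward closed, and closed under meets. -/
def IsLatticeFilter {A : Type*} [Lattice A] [BoundedOrder A] (F : Set A) : Prop :=
  ⊤ ∈ F ∧ (∀ a b : A, a ∈ F → a ≤ b → b ∈ F) ∧ (∀ a b : A, a ∈ F → b ∈ F → a ⊓ b ∈ F)

/-- `F` is a maximal proper filter. -/
def IsMaximalFilter {A : Type*} [Lattice A] [BoundedOrder A] (F : Set A) : Prop :=
  IsLatticeFilter F ∧ (⊥ : A) ∉ F ∧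
    ∀ G : Set A, IsLatticeFilter G → (⊥ : A) ∉ G → F ⊆ G → G = F

/-- `F` is a prime filter: proper, and `a ⊔ b ∈ F` implies `a ∈ F` or `b ∈ F`. -/
def IsPrimeFilter {A : Type*} [Lattice A] [BoundedOrder A] (F : Set A) : Prop :=
  IsLatticeFilter F ∧ (⊥ : A) ∉ F ∧ ∀ a b : A, a ⊔ b ∈ F → a ∈ F ∨ b ∈ F

/-- If `M` is a maximal proper filter and `a ∉ M`, there is `b ∈ M` with `a ⊓ b = ⊥`. -/
lemma maximal_compl {A : Type*} [Lattice A] [BoundedOrder A] {M : Set A}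
    (hM : IsMaximalFilter M) {a : A} (ha : a ∉ M) : ∃ b ∈ M, a ⊓ b = ⊥ := by
  obtain ⟨⟨htop, hup, hmeet⟩, hbot, hmax⟩ := hM
  set G : Set A := {x | ∃ b ∈ M, a ⊓ b ≤ x} with hG
  have hGfil : IsLatticeFilter G := by
    refine ⟨⟨⊤, htop, le_top⟩, ?_, ?_⟩
    · rintro x y ⟨b, hb, hxb⟩ hxy
      exact ⟨b, hb, hxb.trans hxy⟩
    · rintro x y ⟨b, hb, hxb⟩ ⟨c, hc, hyc⟩
      exact ⟨b ⊓ c, hmeet b c hb hc, le_inf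
        (le_trans (inf_le_inf_left a inf_le_left) hxb)
        (le_trans (inf_le_inf_left a inf_le_right) hyc)⟩
  have hMG : M ⊆ G := fun x hx => ⟨x, hx, inf_le_right⟩
  by_cases hbG : (⊥ : A) ∈ G
  · obtain ⟨b, hb, hab⟩ := hbG
    exact ⟨b, hb, le_bot_iff.mp hab⟩
  · exfalso
    have := hmax G hGfil hbG hMG
    exact ha (this ▸ (⟨⊤, htop, inf_le_left⟩ : a ∈ G))

/-- Every proper filter is contained in a maximal proper filter. -/
lemma exists_maximal_filter {A : Type*} [Lattice A] [BoundedOrder A] {F : Set A}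
    (hF : IsLatticeFilter F) (hbot : (⊥ : A) ∉ F) :
    ∃ M : Set A, IsMaximalFilter M ∧ F ⊆ M := by
  set S : Set (Set A) := {G | IsLatticeFilter G ∧ (⊥ : A) ∉ G} with hS
  have hzorn : ∀ c ⊆ S, IsChain (· ⊆ ·) c → c.Nonempty →
      ∃ ub ∈ S, ∀ s ∈ c, s ⊆ ub := by
    intro c hcS hchain hcne
    refine ⟨⋃₀ c, ⟨⟨?_, ?_, ?_⟩, ?_⟩, fun s hs => Set.subset_sUnion_of_mem hs⟩
    · obtain ⟨s, hs⟩ := hcne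
      exact ⟨s, hs, (hcS hs).1.1⟩
    · rintro x y ⟨s, hs, hxs⟩ hxy
      exact ⟨s, hs, (hcS hs).1.2.1 x y hxs hxy⟩
    · rintro x y ⟨s, hs, hxs⟩ ⟨t, ht, hyt⟩
      rcases hchain.total hs ht with h | h
      · exact ⟨t, ht, (hcS ht).1.2.2 x y (h hxs) hyt⟩
      · exact ⟨s, hs, (hcS hs).1.2.2 x y hxs (h hyt)⟩
    · rintro ⟨s, hs, hbs⟩
      exact (hcS hs).2 hbs
  obtain ⟨M, hFM, hMmem, hMmax⟩ := zorn_subset_nonempty S hzorn F ⟨hF, hbot⟩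
  exact ⟨M, ⟨hMmem.1, hMmem.2, fun G hG hGb hMG => le_antisymm (hMmax ⟨hG, hGb⟩ hMG) hMG⟩, hFM⟩

/-- In a normal bounded distributive lattice, every prime filter is contained in a
unique maximal proper filter. -/
theorem primeFilter_subset_unique_maxFilter {A : Type*}
    [DistribLattice A] [BoundedOrder A]
    (hnorm : ∀ a b : A, a ⊓ b = ⊥ →
      ∃ a' b' : A, a ⊓ a' = ⊥ ∧ b ⊓ b' = ⊥ ∧ a' ⊔ b' = ⊤)
    (F : Set A) (hF : IsPrimeFilter F) :
    ∃! M : Set A, IsMaximalFilter M ∧ F ⊆ M := by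
  obtain ⟨hFfil, hFbot, hFprime⟩ := hF
  obtain ⟨M, hM, hFM⟩ := exists_maximal_filter hFfil hFbot
  refine ⟨M, ⟨hM, hFM⟩, ?_⟩
  rintro N ⟨hN, hFN⟩
  -- show N = M; it suffices to show N ⊆ M, then maximality of N gives equality
  have key : ∀ (M₁ M₂ : Set A), IsMaximalFilter M₁ → IsMaximalFilter M₂ →
      F ⊆ M₁ → F ⊆ M₂ → M₁ ⊆ M₂ := by
    intro M₁ M₂ h₁ h₂ hF₁ hF₂ a ha
    by_contra ha₂
    obtain ⟨b, hb, hab⟩ := maximal_compl h₂ ha₂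
    obtain ⟨a', b', haa', hbb', hab'⟩ := hnorm a b hab
    have : a' ⊔ b' ∈ F := hab' ▸ hFfil.1
    rcases hFprime a' b' this with h | h
    · exact h₁.2.1 (haa' ▸ h₁.1.2.2 a a' ha (hF₁ h))
    · exact h₂.2.1 (hbb' ▸ h₂.1.2.2 b b' hb (hF₂ h))
  exact Set.Subset.antisymm (key N M hN hM hFN hFM) (key M N hM hN hFM hFN)
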